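/- Let ν be a strict partition and fix an integer a with 1 ≤ a ≤ ℓ(ν). Let (α,β) and (α′,β′) be pairs of partitions satisfying ℓ(α) < a, β₁ < ν_a, ℓ(α′) < a, and β′₁ < ν_a. If the extension of ν by (α,β) equals the extension of ν by (α′,β′), then α = α′ and β = β′. -/

import Mathlib

/-- `μ : ℕ → ℕ` represents a partition via its parts `μ 1 ≥ μ 2 ≥ ⋯`; the index `0` is
unused and required to be `0`.  The parts are weakly decreasing and only finitely many
are nonzero. -/
def IsPartition (μ : ℕ → ℕ) : Prop :=
  μ 0 = 0 ∧ (∀ i, 1 ≤ i → μ (i + 1) ≤ μ i) ∧ {i | μ i ≠ 0}.Finite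

/-- The weight `|μ|` of a partition: the sum of its parts. -/
noncomputable def pweight (μ : ℕ → ℕ) : ℕ := ∑ᶠ i, μ i

/-- The length `ℓ(μ)`: the number of nonzero parts. -/
noncomputable def plength (μ : ℕ → ℕ) : ℕ := Set.ncard {i | 1 ≤ i ∧ μ i ≠ 0}

/-- A partition is strict if its nonzero parts are pairwise distinct. -/
def IsStrict (μ : ℕ → ℕ) : Prop := ∀ i j, 1 ≤ i → i < j → μ j ≠ 0 → μ j < μ i

/-- `(i, j)` is a cell of the Ferrers board of `μ`. -/
def Cell (μ : ℕ → ℕ) (i j : ℕ) : Prop := 1 ≤ i ∧ 1 ≤ j ∧ j ≤ μ i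

/-- The Ferrers board of `μ` as a set of cells. -/
def Board (μ : ℕ → ℕ) : Set (ℕ × ℕ) := {p | Cell μ p.1 p.2}

/-- The number of ways to place `k` non-attacking rooks on the Ferrers board of `μ`,
i.e. the number of `k`-element subsets of the board whose cells have pairwise distinct
row indices and pairwise distinct column indices. -/
noncomputable def rookCount (μ : ℕ → ℕ) (k : ℕ) : ℕ :=
  Set.ncard {s : Finset (ℕ × ℕ) | s.card = k ∧ (∀ p ∈ s, Cell μ p.1 p.2) ∧
    ∀ p ∈ s, ∀ q ∈ s, p ≠ q → p.1 ≠ q.1 ∧ p.2 ≠ q.2}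

/-- Rook equivalence of partitions. -/
def RookEquiv (μ ν : ℕ → ℕ) : Prop := ∀ k, rookCount μ k = rookCount ν k

/-- `α` contains `μ` as a pattern: there are strictly increasing functions `f, g` on the
positive integers such that `(i, j)` is a cell of `μ` iff `(f i, g j)` is a cell of `α`. -/
def Contains (α μ : ℕ → ℕ) : Prop :=
  ∃ f g : ℕ → ℕ,
    (∀ i, 1 ≤ i → 1 ≤ f i) ∧ (∀ j, 1 ≤ j → 1 ≤ g j) ∧
    (∀ i j, 1 ≤ i → i < j → f i < f j) ∧
    (∀ i j, 1 ≤ i → i < j → g i < g j) ∧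
    (∀ i j, 1 ≤ i → 1 ≤ j → (Cell μ i j ↔ Cell α (f i) (g j)))

/-- `P_n(μ)`: the set of partitions of `n` containing `μ`. -/
def PnSet (n : ℕ) (μ : ℕ → ℕ) : Set (ℕ → ℕ) :=
  {α | IsPartition α ∧ pweight α = n ∧ Contains α μ}

/-- `P_n(μ, k)`: the members of `P_n(μ)` whose first part is `k + μ 1`. -/
def PnSetK (n : ℕ) (μ : ℕ → ℕ) (k : ℕ) : Set (ℕ → ℕ) :=
  {α | α ∈ PnSet n μ ∧ α 1 = k + μ 1}

/-- Wilf equivalence of partitions. -/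
def WilfEquiv (μ ν : ℕ → ℕ) : Prop :=
  ∀ n, 1 ≤ n → (PnSet n μ).ncard = (PnSet n ν).ncard

/-- The multiplicity of `v` among the parts `μ 1, μ 2, …` of `μ`. -/
noncomputable def partCount (μ : ℕ → ℕ) (v : ℕ) : ℕ := Set.ncard {i | 1 ≤ i ∧ μ i = v}

/-- `γ` is the extension of `ν` by the pair `(α, β)`: `γ` is a partition whose multiset of
nonzero parts is the multiset union of the nonzero parts of `ν + α` and those of `β`. -/
def IsExtension (ν α β γ : ℕ → ℕ) : Prop :=
  IsPartition γ ∧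
  ∀ v, 1 ≤ v → partCount γ v = partCount (fun i => ν i + α i) v + partCount β v

/-- `ν` is the `(i, j)`-transform of `μ`: the board of `ν` is obtained from the board of
`μ` by replacing the subboard of cells weakly southeast of `(i, j)` by its conjugate. -/
def IsTransform (i j : ℕ) (μ ν : ℕ → ℕ) : Prop :=
  IsPartition μ ∧ IsPartition ν ∧ 1 ≤ i ∧ 1 ≤ j ∧
  Board ν = (Board μ \ {p ∈ Board μ | i ≤ p.1 ∧ j ≤ p.2}) ∪
    (fun p : ℕ × ℕ => (i + (p.2 - j), j + (p.1 - i))) '' {p ∈ Board μ | i ≤ p.1 ∧ j ≤ p.2}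

/-- One step: `ν` is an `(i, 1)`-transform of `μ` for some `i`. -/
def TransformRel1 (μ ν : ℕ → ℕ) : Prop := ∃ i, IsTransform i 1 μ ν

/-- `(i, 1)`-equivalence: a finite (possibly empty) sequence of `(i, 1)`-transformations. -/
def TransformEquiv1 : (ℕ → ℕ) → (ℕ → ℕ) → Prop := Relation.ReflTransGen TransformRel1

/-- One step: `ν` is an `(i, j)`-transform of `μ` for some `i, j`. -/
def TransformRel (μ ν : ℕ → ℕ) : Prop := ∃ i j, IsTransform i j μ ν

/-- Differing by a finite sequence of `(i, j)`-transformations. -/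
def TransformEquiv : (ℕ → ℕ) → (ℕ → ℕ) → Prop := Relation.ReflTransGen TransformRel

/-- Row `i` of `μ` is salient if `i + μ i ≥ j + μ j` for some `j > i`. -/
def Salient (μ : ℕ → ℕ) (i : ℕ) : Prop := ∃ j, i < j ∧ j + μ j ≤ i + μ i

/-- The multiplicity of `v` in the multiset `S_μ = {i + μ i : row i of μ is salient}`. -/
noncomputable def salientCount (μ : ℕ → ℕ) (v : ℕ) : ℕ :=
  Set.ncard {i | 1 ≤ i ∧ Salient μ i ∧ i + μ i = v}

/-- The staircase rank of `μ`: the largest `k` with `μ i ≥ k - i + 1` for `1 ≤ i ≤ k`. -/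
noncomputable def staircaseRank (μ : ℕ → ℕ) : ℕ :=
  sSup {k | ∀ i, 1 ≤ i → i ≤ k → k + 1 ≤ μ i + i}

/-- The number of cells of the L in `μ` with corner `p = (i, j)`: the cells `(i, x)` of `μ`
with `x ≥ j` together with the cells `(y, j)` with `1 ≤ y ≤ i`. -/
def LWeight (μ : ℕ → ℕ) (p : ℕ × ℕ) : ℕ := (μ p.1 - p.2) + p.1

/-- `c` lists the corners of a nested sequence of `k` L's in `μ`: each corner is a cell of
`μ`, and later corners are strictly above and strictly to the right of earlier ones. -/
def IsNested (μ : ℕ → ℕ) {k : ℕ} (c : Fin k → ℕ × ℕ) : Prop :=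
  (∀ a, Cell μ (c a).1 (c a).2) ∧
  ∀ a b : Fin k, a < b → (c b).1 < (c a).1 ∧ (c a).2 < (c b).2

/-- `w_k(μ)`: the maximum weight of a sequence of `k` nested L's in `μ`
(`0` if there is no such sequence). -/
noncomputable def nestedLMax (μ : ℕ → ℕ) (k : ℕ) : ℕ :=
  sSup {w | ∃ c : Fin k → ℕ × ℕ, IsNested μ c ∧ ∑ a, LWeight μ (c a) = w}

lemma part_anti {μ : ℕ → ℕ} (h : IsPartition μ) :
    ∀ j i, 1 ≤ i → i ≤ j → μ j ≤ μ i := by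
  intro j
  induction j with
  | zero => intro i h1 h2; omega
  | succ n ih =>
    intro i h1 h2
    rcases Nat.lt_or_ge i (n + 1) with hlt | hge
    · exact le_trans (h.2.1 n (by omega)) (ih i h1 (by omega))
    · have : i = n + 1 := by omega
      simp [this]

lemma zero_of_plength_lt {α : ℕ → ℕ} (hα : IsPartition α) {a : ℕ} (ha : 1 ≤ a)
    (h : plength α < a) : ∀ i, a ≤ i → α i = 0 := by
  have haa : α a = 0 := by
    by_contra hne
    have hsub : (↑(Finset.Icc 1 a) : Set ℕ) ⊆ {i | 1 ≤ i ∧ α i ≠ 0} := by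
      intro i hi
      simp only [Finset.coe_Icc, Set.mem_Icc] at hi
      have := part_anti hα a i hi.1 hi.2
      exact ⟨hi.1, by omega⟩
    have hfin : {i | 1 ≤ i ∧ α i ≠ 0}.Finite :=
      hα.2.2.subset (fun i hi => hi.2)
    have := Set.ncard_le_ncard hsub hfin
    rw [Set.ncard_coe_finset, Nat.card_Icc] at this
    unfold plength at h
    omega
  intro i hi
  have := part_anti hα i a ha hi
  omega

lemma nu_pos_of_le_plength {ν : ℕ → ℕ} (hν : IsPartition ν) {a : ℕ} (ha1 : 1 ≤ a)
    (ha2 : a ≤ plength ν) : ν a ≠ 0 := by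
  intro h0
  have hsub : {i | 1 ≤ i ∧ ν i ≠ 0} ⊆ (↑(Finset.Icc 1 (a - 1)) : Set ℕ) := by
    intro i hi
    simp only [Finset.coe_Icc, Set.mem_Icc]
    refine ⟨hi.1, ?_⟩
    by_contra hc
    have hai : a ≤ i := by omega
    have := part_anti hν i a ha1 hai
    exact hi.2 (by omega)
  have := Set.ncard_le_ncard hsub (Finset.Icc 1 (a - 1)).finite_toSet
  rw [Set.ncard_coe_finset, Nat.card_Icc] at this
  unfold plength at ha2
  omega

/-- The set of rows of `μ` with part at least `v`. -/
def Nge (μ : ℕ → ℕ) (v : ℕ) : Set ℕ := {j | 1 ≤ j ∧ v ≤ μ j}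

lemma Nge_finite {μ : ℕ → ℕ} (h : IsPartition μ) {v : ℕ} (hv : 1 ≤ v) :
    (Nge μ v).Finite :=
  h.2.2.subset (fun j hj => by
    simp only [Nge, Set.mem_setOf_eq] at hj ⊢
    omega)

lemma partCount_finite {μ : ℕ → ℕ} (h : IsPartition μ) {v : ℕ} (hv : 1 ≤ v) :
    {i | 1 ≤ i ∧ μ i = v}.Finite :=
  h.2.2.subset (fun j hj => by
    simp only [Set.mem_setOf_eq] at hj ⊢
    omega)

lemma eq_Icc_of_dc {S : Set ℕ} (hfin : S.Finite) (h0 : ∀ j ∈ S, 1 ≤ j)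
    (hdc : ∀ j ∈ S, ∀ k, 1 ≤ k → k ≤ j → k ∈ S) : S = Set.Icc 1 S.ncard := by
  classical
  rcases S.eq_empty_or_nonempty with rfl | hne
  · simp
  · have hne' : hfin.toFinset.Nonempty := by rwa [Set.Finite.toFinset_nonempty]
    set M := hfin.toFinset.max' hne' with hMdef
    have hMS : M ∈ S := by
      have := hfin.toFinset.max'_mem hne'
      rwa [Set.Finite.mem_toFinset] at this
    have hSeq : S = Set.Icc 1 M := by
      apply Set.Subset.antisymm
      · intro x hx
        refine ⟨h0 x hx, ?_⟩
        have := hfin.toFinset.le_max' x (by rwa [Set.Finite.mem_toFinset])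
        exact this
      · intro x hx
        exact hdc M hMS x hx.1 hx.2
    have hIcc : (Set.Icc 1 M).ncard = M := by
      rw [show Set.Icc 1 M = (↑(Finset.Icc 1 M) : Set ℕ) by simp,
        Set.ncard_coe_finset, Nat.card_Icc]
      omega
    rw [hSeq, hIcc]

lemma Nge_mem_iff {μ : ℕ → ℕ} (hμ : IsPartition μ) {v : ℕ} (hv : 1 ≤ v) (i : ℕ) :
    i ∈ Nge μ v ↔ 1 ≤ i ∧ i ≤ (Nge μ v).ncard := by
  have hdc : ∀ j ∈ Nge μ v, ∀ k, 1 ≤ k → k ≤ j → k ∈ Nge μ v := by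
    intro j hj k hk1 hkj
    have := part_anti hμ j k hk1 hkj
    exact ⟨hk1, by have := hj.2; omega⟩
  conv_lhs => rw [eq_Icc_of_dc (Nge_finite hμ hv) (fun j hj => hj.1) hdc]
  simp [Set.mem_Icc]

lemma Nge_succ_ncard {μ : ℕ → ℕ} (hμ : IsPartition μ) {v : ℕ} (hv : 1 ≤ v) :
    (Nge μ v).ncard = (Nge μ (v + 1)).ncard + partCount μ v := by
  have hsub : Nge μ v = Nge μ (v + 1) ∪ {j | 1 ≤ j ∧ μ j = v} := by
    ext j
    simp only [Nge, Set.mem_union, Set.mem_setOf_eq]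
    omega
  rw [hsub, Set.ncard_union_eq ?_ (Nge_finite hμ (by omega)) (partCount_finite hμ hv)]
  · rfl
  · rw [Set.disjoint_left]
    intro j hj1 hj2
    simp only [Nge, Set.mem_setOf_eq] at hj1 hj2
    omega

lemma Nge_empty {μ : ℕ → ℕ} (hμ : IsPartition μ) {v : ℕ} (hv : μ 1 < v) :
    Nge μ v = ∅ := by
  ext j
  simp only [Nge, Set.mem_setOf_eq, Set.mem_empty_iff_false, iff_false, not_and]
  intro hj
  have := part_anti hμ j 1 le_rfl hj
  omega

lemma ncard_Nge_eq {μ σ : ℕ → ℕ} (hμ : IsPartition μ) (hσ : IsPartition σ)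
    (h : ∀ v, 1 ≤ v → partCount μ v = partCount σ v) :
    ∀ v, 1 ≤ v → (Nge μ v).ncard = (Nge σ v).ncard := by
  set M := max (μ 1) (σ 1) with hM
  have key : ∀ k v, 1 ≤ v → M + 1 ≤ v + k → (Nge μ v).ncard = (Nge σ v).ncard := by
    intro k
    induction k with
    | zero =>
      intro v hv hvk
      rw [Nge_empty hμ (by omega), Nge_empty hσ (by omega)]
    | succ n ih =>
      intro v hv hvk
      by_cases hc : M + 1 ≤ v
      · rw [Nge_empty hμ (by omega), Nge_empty hσ (by omega)]
      · rw [Nge_succ_ncard hμ hv, Nge_succ_ncard hσ hv, ih (v + 1) (by omega) (by omega),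
          h v hv]
  intro v hv
  exact key (M + 1) v hv (by omega)

lemma eq_of_partCount_eq {μ σ : ℕ → ℕ} (hμ : IsPartition μ) (hσ : IsPartition σ)
    (h : ∀ v, 1 ≤ v → partCount μ v = partCount σ v) : μ = σ := by
  have hcard := ncard_Nge_eq hμ hσ h
  have main : ∀ μ' σ' : ℕ → ℕ, IsPartition μ' → IsPartition σ' →
      (∀ v, 1 ≤ v → (Nge μ' v).ncard = (Nge σ' v).ncard) →
      ∀ i, 1 ≤ i → μ' i ≤ σ' i := by
    intro μ' σ' hμ' hσ' hc i hi
    by_cases h0 : μ' i = 0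
    · omega
    · have hv : 1 ≤ μ' i := by omega
      have hmem : i ∈ Nge μ' (μ' i) := ⟨hi, le_rfl⟩
      rw [Nge_mem_iff hμ' hv] at hmem
      have : i ∈ Nge σ' (μ' i) := by
        rw [Nge_mem_iff hσ' hv, ← hc (μ' i) hv]
        exact hmem
      exact this.2
  funext i
  rcases Nat.eq_zero_or_pos i with rfl | hi
  · rw [hμ.1, hσ.1]
  · exact le_antisymm (main μ σ hμ hσ hcard i hi)
      (main σ μ hσ hμ (fun v hv => (hcard v hv).symm) i hi)

theorem extension_unique (ν : ℕ → ℕ) (hν : IsPartition ν) (hνs : IsStrict ν)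
    (a : ℕ) (ha1 : 1 ≤ a) (ha2 : a ≤ plength ν)
    (α β α' β' γ : ℕ → ℕ)
    (hα : IsPartition α) (hβ : IsPartition β)
    (hα' : IsPartition α') (hβ' : IsPartition β')
    (hlα : plength α < a) (hbβ : β 1 < ν a)
    (hlα' : plength α' < a) (hbβ' : β' 1 < ν a)
    (h : IsExtension ν α β γ) (h' : IsExtension ν α' β' γ) :
    α = α' ∧ β = β' := by
  have hνa : ν a ≠ 0 := nu_pos_of_le_plength hν ha1 ha2
  have hα0 : ∀ i, a ≤ i → α i = 0 := zero_of_plength_lt hα ha1 hlα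
  have hα'0 : ∀ i, a ≤ i → α' i = 0 := zero_of_plength_lt hα' ha1 hlα'
  have hpart : ∀ α0 : ℕ → ℕ, IsPartition α0 → IsPartition (fun i => ν i + α0 i) := by
    intro α0 hα0p
    refine ⟨by simp [hν.1, hα0p.1], fun i hi => add_le_add (hν.2.1 i hi) (hα0p.2.1 i hi), ?_⟩
    apply (hν.2.2.union hα0p.2.2).subset
    intro i hi
    simp only [Set.mem_setOf_eq, Set.mem_union] at hi ⊢
    omega
  have hνα := hpart α hα
  have hνα' := hpart α' hα'
  -- counts of ν + α and ν + α' agree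
  have hcnt : ∀ v, 1 ≤ v →
      partCount (fun i => ν i + α i) v = partCount (fun i => ν i + α' i) v := by
    intro v hv
    by_cases hc : v < ν a
    · have hgen : ∀ α0 : ℕ → ℕ, (∀ i, a ≤ i → α0 i = 0) →
          {i | 1 ≤ i ∧ (fun i => ν i + α0 i) i = v} = {i | 1 ≤ i ∧ a < i ∧ ν i = v} := by
        intro α0 h0
        ext i
        simp only [Set.mem_setOf_eq]
        constructor
        · rintro ⟨hi1, hi2⟩
          have hia : a < i := by
            by_contra hle
            have := part_anti hν a i hi1 (by omega)
            omega
          exact ⟨hi1, hia, by have := h0 i (le_of_lt hia); omega⟩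
        · rintro ⟨hi1, hia, hiv⟩
          refine ⟨hi1, ?_⟩
          have := h0 i (le_of_lt hia)
          omega
      unfold partCount
      rw [hgen α hα0, hgen α' hα'0]
    · have hb : ∀ β0 : ℕ → ℕ, IsPartition β0 → β0 1 < ν a → partCount β0 v = 0 := by
        intro β0 hβ0 hb1
        unfold partCount
        have : {i | 1 ≤ i ∧ β0 i = v} = ∅ := by
          ext i
          simp only [Set.mem_setOf_eq, Set.mem_empty_iff_false, iff_false, not_and]
          intro hi1 hiv
          have := part_anti hβ0 i 1 le_rfl hi1
          omega
        rw [this, Set.ncard_empty]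
      have e1 := h.2 v hv
      have e2 := h'.2 v hv
      rw [hb β hβ hbβ] at e1
      rw [hb β' hβ' hbβ'] at e2
      omega
  have hαα : (fun i => ν i + α i) = (fun i => ν i + α' i) :=
    eq_of_partCount_eq hνα hνα' hcnt
  have hA : α = α' := by
    funext i
    have := congrFun hαα i
    omega
  refine ⟨hA, ?_⟩
  have hcntβ : ∀ v, 1 ≤ v → partCount β v = partCount β' v := by
    intro v hv
    have e1 := h.2 v hv
    have e2 := h'.2 v hv
    rw [hcnt v hv] at e1
    omega
  exact eq_of_partCount_eq hβ hβ' hcntβ
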